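/- Let n, N, N̂, m, T be positive integers and δ ≥ 0, π > 0, λ ∈ (0,1], 0 < γ₁ < γ₂ real numbers with (1 + 1/π)·‖√P‖²·δ ≤ γ₂(1−λ). Let A (n×N), B (n×N̂) be real matrices and R₀T (N×T), G₀T (N̂×T), U₀T (m×T), W₀T (n×T), X₁T (n×T) real data matrices with X₁T = A·R₀T + B·G₀T + W₀T and every column w of W₀T satisfying wᵀw ≤ δ. Let P be a real n×n positive definite matrix, and let L : ℝⁿ → ℝ^{N×n}, G : ℝⁿ → ℝ^{N̂×m}, H : ℝⁿ → ℝ^{T×n}, α : ℝⁿ → (0,∞) be functions such that for every x ∈ ℝⁿ: R₀T·H(x) = L(x)·P⁻¹. Let X₀, X₁ ⊆ ℝⁿ satisfy xᵀPx ≤ γ₁ for all x ∈ X₀ and xᵀPx ≥ γ₂ for all x ∈ X₁, and assume for every x in X̃ := {x ∈ ℝⁿ : xᵀPx < γ₂} the block matrix [[−λP⁻¹, 0, 0], [0, 0, R̃(x)·H(x)], [0, (R̃(x)·H(x))ᵀ, −(1+π)⁻¹P⁻¹]] − α(x)·[[X₁T·X₁Tᵀ − TδIₙ, −X₁T·R̂ᵀ,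 0], [−R̂·X₁Tᵀ, R̂·R̂ᵀ, 0], [0, 0, 0]] is negative semidefinite, where R̃(x) := [R₀T; G(x)·U₀T] and R̂ := [R₀T; G₀T]. Then B(x) := xᵀPx is a robust control barrier certificate with ρ = (1 + 1/π)‖√P‖²: B(x) ≤ γ₁ on X₀, B(x) ≥ γ₂ on X₁, and for every x ∈ X̃ the input u(x) := (U₀T·H(x)·P)·x satisfies, for every w ∈ ℝⁿ with wᵀw ≤ δ, B(A·(L(x)·x) + B·(G(x)·u(x)) + w) ≤ λ·B(x) + ρ·wᵀw. -/

import Mathlib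

open Matrix

/-- A real matrix is negative semidefinite if it is symmetric and
`vᵀ M v ≤ 0` for all real vectors `v`. -/
def Matrix.NegSemidef {k : Type*} [Fintype k] (M : Matrix k k ℝ) : Prop :=
  M.IsSymm ∧ ∀ v : k → ℝ, v ⬝ᵥ M.mulVec v ≤ 0

/-- The positive semidefinite square root, with its definition from the older Mathlib
(removed since in favour of `CFC.sqrt`). -/
noncomputable def Matrix.PosSemidef.sqrt {n : Type*} [Fintype n]
    [DecidableEq n] {A : Matrix n n ℝ} (hA : A.PosSemidef) : Matrix n n ℝ :=
  hA.1.eigenvectorUnitary.1 * diagonal ((↑) ∘ Real.sqrt ∘ hA.1.eigenvalues) *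
    (star hA.1.eigenvectorUnitary : Matrix n n ℝ)

/-- The `ℓ² → ℓ²` operator norm of a real square matrix. -/
noncomputable def l2OpNorm {n : ℕ} (M : Matrix (Fin n) (Fin n) ℝ) : ℝ :=
  ‖Matrix.toEuclideanCLM (𝕜 := ℝ) M‖


section Helpers

open Matrix

lemma euclid_norm_sq' {n : ℕ} (u : Fin n → ℝ) :
    ‖(WithLp.equiv 2 (Fin n → ℝ)).symm u‖ ^ 2 = u ⬝ᵥ u := by
  rw [EuclideanSpace.norm_eq, Real.sq_sqrt (by positivity)]
  simp [dotProduct, sq]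

lemma dot_sq_opnorm' {n : ℕ} (S : Matrix (Fin n) (Fin n) ℝ) (v : Fin n → ℝ) :
    (S *ᵥ v) ⬝ᵥ (S *ᵥ v) ≤ l2OpNorm S ^ 2 * (v ⬝ᵥ v) := by
  have h := (toEuclideanCLM (𝕜 := ℝ) S).le_opNorm ((WithLp.equiv 2 (Fin n → ℝ)).symm v)
  change ‖toEuclideanCLM (𝕜 := ℝ) S (WithLp.toLp 2 v)‖ ≤ _ at h
  rw [Matrix.toEuclideanCLM_toLp] at h
  have h2 : ‖(WithLp.equiv 2 (Fin n → ℝ)).symm (S *ᵥ v)‖ ^ 2 ≤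
      (l2OpNorm S * ‖(WithLp.equiv 2 (Fin n → ℝ)).symm v‖) ^ 2 :=
    pow_le_pow_left₀ (norm_nonneg _) h 2
  rw [euclid_norm_sq'] at h2
  calc (S *ᵥ v) ⬝ᵥ (S *ᵥ v) ≤ (l2OpNorm S * ‖(WithLp.equiv 2 (Fin n → ℝ)).symm v‖) ^ 2 := h2
    _ = l2OpNorm S ^ 2 * (v ⬝ᵥ v) := by rw [mul_pow, euclid_norm_sq']

lemma cs_dot' {n : ℕ} (u a : Fin n → ℝ) : (u ⬝ᵥ a) ^ 2 ≤ (u ⬝ᵥ u) * (a ⬝ᵥ a) := by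
  simpa [dotProduct, sq] using Finset.sum_mul_sq_le_sq_mul_sq Finset.univ u a

lemma dot_mul_mulVec' {k l p : Type*} [Fintype k] [Fintype l] [Fintype p]
    (u : k → ℝ) (M : Matrix k l ℝ) (Nm : Matrix l p ℝ) (v : p → ℝ) :
    u ⬝ᵥ (M * Nm) *ᵥ v = (Mᵀ *ᵥ u) ⬝ᵥ (Nm *ᵥ v) := by
  rw [← mulVec_mulVec, dotProduct_mulVec u M, ← mulVec_transpose]

lemma dot_self_nonneg' {k : Type*} [Fintype k] (u : k → ℝ) : 0 ≤ u ⬝ᵥ u :=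
  Finset.sum_nonneg fun i _ => mul_self_nonneg _

lemma psd_sqrt_mul_self' {n : ℕ} {P : Matrix (Fin n) (Fin n) ℝ} (hA : P.PosSemidef) :
    hA.sqrt * hA.sqrt = P := by
  have hU : star (hA.1.eigenvectorUnitary : Matrix (Fin n) (Fin n) ℝ) *
      (hA.1.eigenvectorUnitary : Matrix (Fin n) (Fin n) ℝ) = 1 :=
    (Matrix.mem_unitaryGroup_iff').1 hA.1.eigenvectorUnitary.2
  have hsp := hA.1.spectral_theorem
  rw [Unitary.conjStarAlgAut_apply] at hsp
  refine Eq.trans ?_ hsp.symm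
  rw [Matrix.PosSemidef.sqrt]
  simp only [Matrix.mul_assoc]
  rw [← Matrix.mul_assoc (star (hA.1.eigenvectorUnitary : Matrix (Fin n) (Fin n) ℝ)), hU,
    Matrix.one_mul, ← Matrix.mul_assoc (diagonal _) (diagonal _), diagonal_mul_diagonal]
  congr 3
  funext i
  simp [Real.mul_self_sqrt (hA.eigenvalues_nonneg i)]

lemma psd_sqrt_transpose' {n : ℕ} {P : Matrix (Fin n) (Fin n) ℝ} (hA : P.PosSemidef) :
    (hA.sqrt)ᵀ = hA.sqrt := by
  rw [← conjTranspose_eq_transpose_of_trivial]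
  simp [Matrix.PosSemidef.sqrt, conjTranspose_mul, Matrix.mul_assoc, Matrix.star_eq_conjTranspose]

end Helpers

set_option maxHeartbeats 1000000 in
/-- **Theorem 2 (data-driven R-CBC and R-SC).** Under the data-dependent conditions,
`B(x) = xᵀ P x` is a robust control barrier certificate with `ρ = (1 + 1/π) ‖√P‖²`:
`B ≤ γ₁` on `X₀`, `B ≥ γ₂` on `X₁`, and on `X̃ = {x : B(x) < γ₂}` the controller
`u(x) = U₀T H(x) P x` enforces `B(x⁺) ≤ λ B(x) + ρ wᵀw` for all `w` with `wᵀw ≤ δ`. -/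
theorem data_driven_RCBC_RSC
    (n N Nh m T : ℕ) (hn : 0 < n) (hN : 0 < N) (hNh : 0 < Nh) (hm : 0 < m) (hT : 0 < T)
    (δ π lam γ₁ γ₂ : ℝ) (hδ : 0 ≤ δ) (hπ : 0 < π)
    (hlam₀ : 0 < lam) (hlam₁ : lam ≤ 1) (hγ₁ : 0 < γ₁) (hγ : γ₁ < γ₂)
    (A : Matrix (Fin n) (Fin N) ℝ) (B : Matrix (Fin n) (Fin Nh) ℝ)
    (R₀T : Matrix (Fin N) (Fin T) ℝ) (G₀T : Matrix (Fin Nh) (Fin T) ℝ)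
    (U₀T : Matrix (Fin m) (Fin T) ℝ) (W₀T X₁T : Matrix (Fin n) (Fin T) ℝ)
    (hdata : X₁T = A * R₀T + B * G₀T + W₀T)
    (hW : ∀ k : Fin T, (fun i => W₀T i k) ⬝ᵥ (fun i => W₀T i k) ≤ δ)
    (P : Matrix (Fin n) (Fin n) ℝ) (hP : P.PosDef)
    (hρδ : (1 + 1 / π) * l2OpNorm hP.posSemidef.sqrt ^ 2 * δ ≤ γ₂ * (1 - lam))
    (L : (Fin n → ℝ) → Matrix (Fin N) (Fin n) ℝ)
    (G : (Fin n → ℝ) → Matrix (Fin Nh) (Fin m) ℝ)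
    (H : (Fin n → ℝ) → Matrix (Fin T) (Fin n) ℝ)
    (α : (Fin n → ℝ) → ℝ) (hα : ∀ x, 0 < α x)
    (hH : ∀ x : Fin n → ℝ, R₀T * H x = L x * P⁻¹)
    (X₀ X₁ : Set (Fin n → ℝ))
    (hX₀ : ∀ x ∈ X₀, x ⬝ᵥ P.mulVec x ≤ γ₁)
    (hX₁ : ∀ x ∈ X₁, γ₂ ≤ x ⬝ᵥ P.mulVec x)
    (Rh : Matrix (Fin N ⊕ Fin Nh) (Fin T) ℝ) (hRh : Rh = fromRows R₀T G₀T)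
    (hLMI : ∀ x : Fin n → ℝ, x ⬝ᵥ P.mulVec x < γ₂ →
      Matrix.NegSemidef
        (fromBlocks (-(lam • P⁻¹))
            (fromCols (0 : Matrix (Fin n) (Fin N ⊕ Fin Nh) ℝ)
              (0 : Matrix (Fin n) (Fin n) ℝ))
            (fromRows (0 : Matrix (Fin N ⊕ Fin Nh) (Fin n) ℝ)
              (0 : Matrix (Fin n) (Fin n) ℝ))
            (fromBlocks (0 : Matrix (Fin N ⊕ Fin Nh) (Fin N ⊕ Fin Nh) ℝ)
              (fromRows R₀T (G x * U₀T) * H x) (fromRows R₀T (G x * U₀T) * H x)ᵀ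
              (-((1 + π)⁻¹ • P⁻¹)))
          - α x •
          fromBlocks (X₁T * X₁Tᵀ - ((T : ℝ) * δ) • (1 : Matrix (Fin n) (Fin n) ℝ))
            (fromCols (-(X₁T * Rhᵀ)) (0 : Matrix (Fin n) (Fin n) ℝ))
            (fromRows (-(Rh * X₁Tᵀ)) (0 : Matrix (Fin n) (Fin n) ℝ))
            (fromBlocks (Rh * Rhᵀ) (0 : Matrix (Fin N ⊕ Fin Nh) (Fin n) ℝ)
              (0 : Matrix (Fin n) (Fin N ⊕ Fin Nh) ℝ) (0 : Matrix (Fin n) (Fin n) ℝ)))) :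
    (∀ x ∈ X₀, x ⬝ᵥ P.mulVec x ≤ γ₁) ∧
    (∀ x ∈ X₁, γ₂ ≤ x ⬝ᵥ P.mulVec x) ∧
    (∀ x : Fin n → ℝ, x ⬝ᵥ P.mulVec x < γ₂ →
      ∀ w : Fin n → ℝ, w ⬝ᵥ w ≤ δ →
        ((A.mulVec (L x |>.mulVec x)
            + B.mulVec ((G x).mulVec ((U₀T * H x * P).mulVec x)) + w) ⬝ᵥ
          P.mulVec (A.mulVec (L x |>.mulVec x)
            + B.mulVec ((G x).mulVec ((U₀T * H x * P).mulVec x)) + w))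
          ≤ lam * (x ⬝ᵥ P.mulVec x)
            + (1 + 1 / π) * l2OpNorm hP.posSemidef.sqrt ^ 2 * (w ⬝ᵥ w)) := by
  have hdet : IsUnit P.det := isUnit_iff_ne_zero.2 hP.det_pos.ne'
  have hPinv : P⁻¹ * P = 1 := nonsing_inv_mul P hdet
  have hPsymm : Pᵀ = P := by
    rw [← conjTranspose_eq_transpose_of_trivial]; exact hP.1.eq
  have dotP_symm : ∀ u v : Fin n → ℝ, u ⬝ᵥ P *ᵥ v = v ⬝ᵥ P *ᵥ u := by
    intro u v
    rw [dotProduct_mulVec, ← mulVec_transpose, hPsymm, dotProduct_comm]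
  refine ⟨hX₀, hX₁, ?_⟩
  intro x hx w hw
  obtain ⟨Mx, hMx⟩ : ∃ M, M = fromRows R₀T (G x * U₀T) * H x := ⟨_, rfl⟩
  obtain ⟨D, hD⟩ : ∃ Dm, Dm = fromCols A B * Mx := ⟨_, rfl⟩
  obtain ⟨z, hz⟩ : ∃ zv, zv = D *ᵥ (P *ᵥ x) := ⟨_, rfl⟩
  -- the closed-loop next state is z + w
  have hxplus : A *ᵥ (L x *ᵥ x) + B *ᵥ ((G x) *ᵥ ((U₀T * H x * P) *ᵥ x)) = z := by
    have hLx : L x = R₀T * H x * P := by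
      rw [hH x, Matrix.mul_assoc, hPinv, Matrix.mul_one]
    rw [hLx, hz, hD, hMx, mulVec_mulVec, mulVec_mulVec, mulVec_mulVec, mulVec_mulVec,
      ← Matrix.add_mulVec]
    congr 1
    rw [← Matrix.mul_assoc (fromCols A B), fromCols_mul_fromRows]
    simp only [Matrix.add_mul, Matrix.mul_assoc]
  -- the key inequality extracted from the LMI
  have key : ∀ a c : Fin n → ℝ,
      2 * (a ⬝ᵥ D *ᵥ c) ≤ lam * (a ⬝ᵥ P⁻¹ *ᵥ a) + (1 + π)⁻¹ * (c ⬝ᵥ P⁻¹ *ᵥ c) := by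
    intro a c
    set b := (fromCols A B)ᵀ *ᵥ a with hb
    have h := (hLMI x hx).2 (Sum.elim a (Sum.elim b c))
    simp only [sub_mulVec, smul_mulVec, fromBlocks_mulVec, fromCols_mulVec_sumElim,
      fromRows_mulVec, sumElim_dotProduct_sumElim, dotProduct_sub, dotProduct_smul,
      dotProduct_add, mulVec_add, zero_mulVec, mulVec_zero, dotProduct_zero, zero_dotProduct,
      neg_mulVec, dotProduct_neg, neg_dotProduct, smul_eq_mul, add_zero, zero_add,
      Pi.add_apply, sub_dotProduct, Sum.elim_comp_inl, Sum.elim_comp_inr, one_mulVec] at h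
    rw [← hMx] at h
    have e1 : b ⬝ᵥ Mx *ᵥ c = a ⬝ᵥ D *ᵥ c := by
      rw [hb, mulVec_transpose, ← dotProduct_mulVec, mulVec_mulVec, hD]
    have e2 : c ⬝ᵥ Mxᵀ *ᵥ b = a ⬝ᵥ D *ᵥ c := by
      rw [dotProduct_comm, mulVec_transpose, ← dotProduct_mulVec, e1]
    have hABRh : fromCols A B * Rh = X₁T - W₀T := by
      rw [hRh, fromCols_mul_fromRows, hdata]; abel
    have hRb : Rhᵀ *ᵥ b = X₁Tᵀ *ᵥ a - W₀Tᵀ *ᵥ a := by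
      rw [hb, mulVec_mulVec, ← transpose_mul, hABRh, transpose_sub, sub_mulVec]
    have q2a : a ⬝ᵥ (X₁T * X₁Tᵀ) *ᵥ a = (X₁Tᵀ *ᵥ a) ⬝ᵥ (X₁Tᵀ *ᵥ a) := dot_mul_mulVec' ..
    have q2b : a ⬝ᵥ (X₁T * Rhᵀ) *ᵥ b = (X₁Tᵀ *ᵥ a) ⬝ᵥ (Rhᵀ *ᵥ b) := dot_mul_mulVec' ..
    have q2c : b ⬝ᵥ (Rh * X₁Tᵀ) *ᵥ a = (Rhᵀ *ᵥ b) ⬝ᵥ (X₁Tᵀ *ᵥ a) := dot_mul_mulVec' ..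
    have q2d : b ⬝ᵥ (Rh * Rhᵀ) *ᵥ b = (Rhᵀ *ᵥ b) ⬝ᵥ (Rhᵀ *ᵥ b) := dot_mul_mulVec' ..
    have hWbound : (W₀Tᵀ *ᵥ a) ⬝ᵥ (W₀Tᵀ *ᵥ a) ≤ (T : ℝ) * δ * (a ⬝ᵥ a) := by
      have ha := dot_self_nonneg' a
      have hterm : ∀ k : Fin T, (W₀Tᵀ *ᵥ a) k * (W₀Tᵀ *ᵥ a) k ≤ δ * (a ⬝ᵥ a) := by
        intro k
        have h1 := cs_dot' (fun i => W₀T i k) a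
        have h2 := hW k
        have h3 : (W₀Tᵀ *ᵥ a) k = (fun i => W₀T i k) ⬝ᵥ a := by
          simp [mulVec, dotProduct, transpose, mul_comm]
        rw [h3]
        nlinarith [sq_nonneg ((fun i => W₀T i k) ⬝ᵥ a)]
      calc (W₀Tᵀ *ᵥ a) ⬝ᵥ (W₀Tᵀ *ᵥ a) = ∑ k : Fin T, (W₀Tᵀ *ᵥ a) k * (W₀Tᵀ *ᵥ a) k := rfl
        _ ≤ ∑ _k : Fin T, δ * (a ⬝ᵥ a) := Finset.sum_le_sum fun k _ => hterm k
        _ = (T : ℝ) * δ * (a ⬝ᵥ a) := by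
            rw [Finset.sum_const, Finset.card_univ, Fintype.card_fin, nsmul_eq_mul]; ring
    -- the disturbance block of the LMI is nonpositive
    have hQ2 : a ⬝ᵥ (X₁T * X₁Tᵀ) *ᵥ a - ↑T * δ * (a ⬝ᵥ a) + -(a ⬝ᵥ (X₁T * Rhᵀ) *ᵥ b) +
        (-(b ⬝ᵥ (Rh * X₁Tᵀ) *ᵥ a) + b ⬝ᵥ (Rh * Rhᵀ) *ᵥ b) ≤ 0 := by
      have expand : (X₁Tᵀ *ᵥ a - Rhᵀ *ᵥ b) ⬝ᵥ (X₁Tᵀ *ᵥ a - Rhᵀ *ᵥ b) =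
          (X₁Tᵀ *ᵥ a) ⬝ᵥ (X₁Tᵀ *ᵥ a) - (X₁Tᵀ *ᵥ a) ⬝ᵥ (Rhᵀ *ᵥ b) -
            (Rhᵀ *ᵥ b) ⬝ᵥ (X₁Tᵀ *ᵥ a) + (Rhᵀ *ᵥ b) ⬝ᵥ (Rhᵀ *ᵥ b) := by
        simp only [sub_dotProduct, dotProduct_sub]; ring
      have hdiff : X₁Tᵀ *ᵥ a - Rhᵀ *ᵥ b = W₀Tᵀ *ᵥ a := by rw [hRb]; abel
      rw [q2a, q2b, q2c, q2d]
      have := hWbound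
      rw [← hdiff, expand] at this
      linarith
    have halpha : α x * (a ⬝ᵥ (X₁T * X₁Tᵀ) *ᵥ a - ↑T * δ * (a ⬝ᵥ a) + -(a ⬝ᵥ (X₁T * Rhᵀ) *ᵥ b) +
        (-(b ⬝ᵥ (Rh * X₁Tᵀ) *ᵥ a) + b ⬝ᵥ (Rh * Rhᵀ) *ᵥ b)) ≤ 0 :=
      mul_nonpos_of_nonneg_of_nonpos (hα x).le hQ2
    rw [e1, e2] at h
    linarith
  -- positivity facts
  have hzPz : (0 : ℝ) ≤ z ⬝ᵥ P *ᵥ z := by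
    have := hP.posSemidef.dotProduct_mulVec_nonneg z
    simpa using this
  -- step: (1+π) zᵀPz ≤ lam xᵀPx
  have hstep : (1 + π) * (z ⬝ᵥ P *ᵥ z) ≤ lam * (x ⬝ᵥ P *ᵥ x) := by
    have h := key (lam⁻¹ • (P *ᵥ z)) (P *ᵥ x)
    have e1 : (lam⁻¹ • (P *ᵥ z)) ⬝ᵥ D *ᵥ (P *ᵥ x) = lam⁻¹ * (z ⬝ᵥ P *ᵥ z) := by
      rw [smul_dotProduct, ← hz, smul_eq_mul, dotProduct_comm]
    have e2 : (lam⁻¹ • (P *ᵥ z)) ⬝ᵥ P⁻¹ *ᵥ (lam⁻¹ • (P *ᵥ z)) =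
        lam⁻¹ * lam⁻¹ * (z ⬝ᵥ P *ᵥ z) := by
      rw [smul_dotProduct, mulVec_smul, dotProduct_smul, smul_eq_mul, smul_eq_mul,
        mulVec_mulVec, hPinv, one_mulVec, dotProduct_comm]
      ring
    have e3 : (P *ᵥ x) ⬝ᵥ P⁻¹ *ᵥ (P *ᵥ x) = x ⬝ᵥ P *ᵥ x := by
      rw [mulVec_mulVec, hPinv, one_mulVec, dotProduct_comm]
    rw [e1, e2, e3] at h
    have hπ1 : (0 : ℝ) < 1 + π := by linarith
    have hls : lam * (lam⁻¹ * lam⁻¹ * (z ⬝ᵥ P *ᵥ z)) = lam⁻¹ * (z ⬝ᵥ P *ᵥ z) := by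
      field_simp
      try ring
    have h2 : lam⁻¹ * (z ⬝ᵥ P *ᵥ z) ≤ (1 + π)⁻¹ * (x ⬝ᵥ P *ᵥ x) := by linarith
    have h3 : (1 + π) * (lam * (lam⁻¹ * (z ⬝ᵥ P *ᵥ z))) ≤
        (1 + π) * (lam * ((1 + π)⁻¹ * (x ⬝ᵥ P *ᵥ x))) := by
      apply mul_le_mul_of_nonneg_left _ hπ1.le
      exact mul_le_mul_of_nonneg_left h2 hlam₀.le
    calc (1 + π) * (z ⬝ᵥ P *ᵥ z) = (1 + π) * (lam * (lam⁻¹ * (z ⬝ᵥ P *ᵥ z))) := by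
          rw [mul_inv_cancel_left₀ hlam₀.ne']
      _ ≤ (1 + π) * (lam * ((1 + π)⁻¹ * (x ⬝ᵥ P *ᵥ x))) := h3
      _ = lam * (x ⬝ᵥ P *ᵥ x) := by
          field_simp
          try ring
  -- cross term
  have hcross : 2 * (z ⬝ᵥ P *ᵥ w) ≤ π * (z ⬝ᵥ P *ᵥ z) + π⁻¹ * (w ⬝ᵥ P *ᵥ w) := by
    have h0 : (0 : ℝ) ≤ (w - π • z) ⬝ᵥ P *ᵥ (w - π • z) := by
      have := hP.posSemidef.dotProduct_mulVec_nonneg (w - π • z); simpa using this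
    have hexp : (w - π • z) ⬝ᵥ P *ᵥ (w - π • z) =
        w ⬝ᵥ P *ᵥ w - 2 * π * (z ⬝ᵥ P *ᵥ w) + π * π * (z ⬝ᵥ P *ᵥ z) := by
      simp only [mulVec_sub, mulVec_smul, sub_dotProduct, dotProduct_sub, smul_dotProduct,
        dotProduct_smul, smul_eq_mul, dotP_symm w z]
      ring
    rw [hexp] at h0
    have h1 : 2 * π * (z ⬝ᵥ P *ᵥ w) ≤ π * π * (z ⬝ᵥ P *ᵥ z) + w ⬝ᵥ P *ᵥ w := by linarith
    have h2 := mul_le_mul_of_nonneg_left h1 (le_of_lt (inv_pos.2 hπ))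
    calc 2 * (z ⬝ᵥ P *ᵥ w) = π⁻¹ * (2 * π * (z ⬝ᵥ P *ᵥ w)) := by field_simp
      _ ≤ π⁻¹ * (π * π * (z ⬝ᵥ P *ᵥ z) + w ⬝ᵥ P *ᵥ w) := h2
      _ = π * (z ⬝ᵥ P *ᵥ z) + π⁻¹ * (w ⬝ᵥ P *ᵥ w) := by field_simp
  -- disturbance energy bound
  have hwPw : w ⬝ᵥ P *ᵥ w ≤ l2OpNorm hP.posSemidef.sqrt ^ 2 * (w ⬝ᵥ w) := by
    set S := hP.posSemidef.sqrt with hS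
    have hsq : S * S = P := psd_sqrt_mul_self' hP.posSemidef
    have hSsymm : Sᵀ = S := by
      exact psd_sqrt_transpose' hP.posSemidef
    calc w ⬝ᵥ P *ᵥ w = w ⬝ᵥ (S * S) *ᵥ w := by rw [hsq]
      _ = (Sᵀ *ᵥ w) ⬝ᵥ (S *ᵥ w) := dot_mul_mulVec' ..
      _ = (S *ᵥ w) ⬝ᵥ (S *ᵥ w) := by rw [hSsymm]
      _ ≤ l2OpNorm S ^ 2 * (w ⬝ᵥ w) := dot_sq_opnorm' S w
  -- put everything together
  rw [hxplus]
  have hexp2 : (z + w) ⬝ᵥ P *ᵥ (z + w) =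
      z ⬝ᵥ P *ᵥ z + 2 * (z ⬝ᵥ P *ᵥ w) + w ⬝ᵥ P *ᵥ w := by
    simp only [mulVec_add, add_dotProduct, dotProduct_add, dotP_symm w z]
    ring
  rw [hexp2]
  have hπinv : (0 : ℝ) < 1 + 1 / π := by positivity
  have hfin : (1 + 1 / π) * (w ⬝ᵥ P *ᵥ w) ≤
      (1 + 1 / π) * (l2OpNorm hP.posSemidef.sqrt ^ 2 * (w ⬝ᵥ w)) :=
    mul_le_mul_of_nonneg_left hwPw hπinv.le
  have hpinv : π⁻¹ = 1 / π := (one_div π).symm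
  rw [hpinv] at hcross
  linarith [hstep, hcross, hfin]
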